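/- Let α > 0 and β > 0. For R > 0 let κ_0(R) be the unique positive solution of (α + β) R I_0(κR) K_0(κR) = 1, write P(x) = I_0(x) K_0(x), and define ς(R) = α (1 − β R) P(R κ_0(R)) + α κ_0(R) R P'(R κ_0(R)). Then there exists R₁ > 0 such that ς(R) < 0 for all R > R₁ (hence the first-order correction t_0 is positive for all sufficiently large R). -/

import Mathlib

open MeasureTheory Real Filter Asymptotics Topology

/-- Modified Bessel function of the first kind of integer order `m`. -/
noncomputable def besselI (m : ℤ) (x : ℝ) : ℝ :=
  (1 / Real.pi) * ∫ θ in (0:ℝ)..Real.pi, Real.exp (x * Real.cos θ) * Real.cos ((m : ℝ) * θ)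

/-- Modified Bessel function of the second kind of integer order `m`. -/
noncomputable def besselK (m : ℤ) (x : ℝ) : ℝ :=
  ∫ t in Set.Ioi (0:ℝ), Real.exp (-x * Real.cosh t) * Real.cosh ((m : ℝ) * t)

/-- `ξ_{m,α,d}(κ) = α R_d I_m(κ R_d) K_m(κ R_d) − 1` with `R_d = R + d`. -/
noncomputable def xiA (m : ℤ) (α R d κ : ℝ) : ℝ :=
  α * (R + d) * (besselI m (κ * (R + d)) * besselK m (κ * (R + d))) - 1

/-- `ξ_{m,β}(κ) = β R I_m(κ R) K_m(κ R) − 1`. -/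
noncomputable def xiB (m : ℤ) (β R κ : ℝ) : ℝ :=
  β * R * (besselI m (κ * R) * besselK m (κ * R)) - 1

/-- `ν_m(κ, d) = α β R_d R K_m(κ R_d)² I_m(κ R)²` with `R_d = R + d`. -/
noncomputable def nu (m : ℤ) (α β R κ d : ℝ) : ℝ :=
  α * β * (R + d) * R * (besselK m (κ * (R + d)))^2 * (besselI m (κ * R))^2

/-- `η_m(κ, d) = ν_m(κ, d) − ξ_{m,α,d}(κ) ξ_{m,β}(κ)`. -/
noncomputable def eta (m : ℤ) (α β R κ d : ℝ) : ℝ :=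
  nu m α β R κ d - xiA m α R d κ * xiB m β R κ

lemma besselK0_eq (x : ℝ) : besselK 0 x = ∫ t in Set.Ioi (0:ℝ), Real.exp (-x * Real.cosh t) := by
  simp [besselK]

lemma besselK1_eq (x : ℝ) :
    besselK 1 x = ∫ t in Set.Ioi (0:ℝ), Real.exp (-x * Real.cosh t) * Real.cosh t := by
  simp [besselK]

lemma besselI0_eq (x : ℝ) :
    besselI 0 x = (1 / Real.pi) * ∫ θ in (0:ℝ)..Real.pi, Real.exp (x * Real.cos θ) := by
  simp [besselI]

lemma besselI1_eq (x : ℝ) :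
    besselI 1 x = (1 / Real.pi) * ∫ θ in (0:ℝ)..Real.pi,
      Real.exp (x * Real.cos θ) * Real.cos θ := by
  simp [besselI]

lemma self_le_cosh (t : ℝ) (ht : 0 ≤ t) : t ≤ Real.cosh t := by
  have h1 := Real.exp_pos (-t)
  have h2 : t ≤ Real.sinh t := by
    rcases eq_or_lt_of_le ht with h | h
    · simp [← h]
    · exact (Real.self_lt_sinh_iff.2 h).le
  rw [Real.cosh_eq]
  rw [Real.sinh_eq] at h2
  linarith

lemma intK1 {c : ℝ} (hc : 0 < c) :
    IntegrableOn (fun t => Real.exp (-c * Real.cosh t) * Real.cosh t) (Set.Ioi 0) := by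
  have hdom : IntegrableOn (fun t => (2 / c) * Real.exp (-(c / 2) * t)) (Set.Ioi 0) :=
    (exp_neg_integrableOn_Ioi 0 (by positivity)).const_mul _
  refine Integrable.mono' hdom (Continuous.aestronglyMeasurable (by fun_prop)) ?_
  filter_upwards [ae_restrict_mem measurableSet_Ioi] with t ht
  have htc : t ≤ Real.cosh t := self_le_cosh t (le_of_lt ht)
  have h1 : 0 ≤ Real.cosh t := (Real.cosh_pos t).le
  have key : Real.cosh t * Real.exp (-(c / 2) * Real.cosh t) ≤ 2 / c := by
    have := Real.add_one_le_exp ((c / 2) * Real.cosh t)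
    have h3 : (c / 2) * Real.cosh t ≤ Real.exp ((c / 2) * Real.cosh t) := by linarith
    rw [show -(c / 2) * Real.cosh t = -((c / 2) * Real.cosh t) by ring, Real.exp_neg,
      mul_inv_le_iff₀ (Real.exp_pos _)]
    calc Real.cosh t ≤ (2 / c) * ((c / 2) * Real.cosh t) := by
          rw [← mul_assoc]; field_simp; exact le_rfl
      _ ≤ (2 / c) * Real.exp ((c / 2) * Real.cosh t) := by
          apply mul_le_mul_of_nonneg_left h3 (by positivity)
  have h4 : Real.exp (-(c / 2) * Real.cosh t) ≤ Real.exp (-(c / 2) * t) := by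
    apply Real.exp_le_exp.2; nlinarith
  rw [Real.norm_eq_abs, abs_of_nonneg (by positivity)]
  calc Real.exp (-c * Real.cosh t) * Real.cosh t
      = (Real.cosh t * Real.exp (-(c / 2) * Real.cosh t)) * Real.exp (-(c / 2) * Real.cosh t) := by
        rw [mul_comm, mul_assoc, ← Real.exp_add]; ring_nf
    _ ≤ (2 / c) * Real.exp (-(c / 2) * t) := by
        apply mul_le_mul key h4 (Real.exp_pos _).le (by positivity)

lemma intK0 {c : ℝ} (hc : 0 < c) :
    IntegrableOn (fun t => Real.exp (-c * Real.cosh t)) (Set.Ioi 0) := by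
  refine Integrable.mono' (intK1 hc) (Continuous.aestronglyMeasurable (by fun_prop)) ?_
  filter_upwards with t
  rw [Real.norm_eq_abs, abs_of_nonneg (Real.exp_pos _).le]
  nlinarith [Real.one_le_cosh t, Real.exp_pos (-c * Real.cosh t)]

lemma hasDerivAt_K0 {x : ℝ} (hx : 0 < x) : HasDerivAt (besselK 0) (-(besselK 1 x)) x := by
  have key := hasDerivAt_integral_of_dominated_loc_of_deriv_le
    (F := fun y t => Real.exp (-y * Real.cosh t))
    (F' := fun y t => Real.exp (-y * Real.cosh t) * (-Real.cosh t))
    (μ := volume.restrict (Set.Ioi (0:ℝ)))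
    (bound := fun t => Real.exp (-(x / 2) * Real.cosh t) * Real.cosh t)
    (Metric.ball_mem_nhds x (show (0:ℝ) < x / 2 by positivity))
    (Filter.Eventually.of_forall fun y => Continuous.aestronglyMeasurable (by fun_prop))
    (intK0 hx)
    (Continuous.aestronglyMeasurable (by fun_prop))
    ?_ (intK1 (show (0:ℝ) < x / 2 by positivity)) ?_
  · have hfun : besselK 0 = fun y => ∫ t in Set.Ioi (0:ℝ), Real.exp (-y * Real.cosh t) := by
      funext y; exact besselK0_eq y
    rw [hfun]
    have hval : (∫ t in Set.Ioi (0:ℝ), Real.exp (-x * Real.cosh t) * (-Real.cosh t))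
        = -(besselK 1 x) := by
      rw [besselK1_eq, ← MeasureTheory.integral_neg]
      congr 1; funext t; ring
    rw [← hval]
    exact key.2
  · filter_upwards with t
    intro y hy
    have hy2 : x / 2 ≤ y := by
      have := abs_lt.1 (mem_ball_iff_norm.1 hy)
      linarith [this.1]
    have h1 : 0 < Real.cosh t := Real.cosh_pos t
    rw [Real.norm_eq_abs, abs_of_nonpos (by nlinarith [Real.exp_pos (-y * Real.cosh t)])]
    have : Real.exp (-y * Real.cosh t) ≤ Real.exp (-(x / 2) * Real.cosh t) :=
      Real.exp_le_exp.2 (by nlinarith)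
    nlinarith [Real.exp_pos (-y * Real.cosh t)]
  · filter_upwards with t
    intro y hy
    simpa using (((hasDerivAt_id y).neg.mul_const (Real.cosh t)).exp)

lemma hasDerivAt_I0 (x : ℝ) : HasDerivAt (besselI 0) (besselI 1 x) x := by
  have key := intervalIntegral.hasDerivAt_integral_of_dominated_loc_of_deriv_le
    (F := fun y θ => Real.exp (y * Real.cos θ))
    (F' := fun y θ => Real.exp (y * Real.cos θ) * Real.cos θ)
    (μ := volume) (a := (0:ℝ)) (b := Real.pi) (x₀ := x)
    (bound := fun _ => Real.exp (|x| + 1))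
    (Metric.ball_mem_nhds x one_pos)
    (Filter.Eventually.of_forall fun y => Continuous.aestronglyMeasurable (by fun_prop))
    (Continuous.intervalIntegrable (by fun_prop) _ _)
    (Continuous.aestronglyMeasurable (by fun_prop))
    ?_ (intervalIntegrable_const) ?_
  · have hfun : besselI 0 = fun y => (1 / Real.pi) *
        ∫ θ in (0:ℝ)..Real.pi, Real.exp (y * Real.cos θ) := by
      funext y; exact besselI0_eq y
    rw [hfun, besselI1_eq]
    exact key.2.const_mul _
  · filter_upwards with θ
    intro _ y hy
    have h1 : |Real.cos θ| ≤ 1 := abs_cos_le_one θ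
    have h2 : |y| ≤ |x| + 1 := by
      have := abs_lt.1 (mem_ball_iff_norm.1 hy)
      cases abs_cases x with
      | inl h => rw [abs_le]; constructor <;> linarith [this.1, this.2, h.1]
      | inr h => rw [abs_le]; constructor <;> linarith [this.1, this.2, h.1]
    have h3 : y * Real.cos θ ≤ |x| + 1 := by
      calc y * Real.cos θ ≤ |y * Real.cos θ| := le_abs_self _
        _ = |y| * |Real.cos θ| := abs_mul _ _
        _ ≤ (|x| + 1) * 1 := by
            apply mul_le_mul h2 h1 (abs_nonneg _) (by positivity)
        _ = |x| + 1 := mul_one _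
    rw [Real.norm_eq_abs, abs_mul, abs_of_nonneg (Real.exp_pos _).le]
    calc Real.exp (y * Real.cos θ) * |Real.cos θ| ≤ Real.exp (|x| + 1) * 1 :=
          mul_le_mul (Real.exp_le_exp.2 h3) h1 (abs_nonneg _) (Real.exp_pos _).le
      _ = Real.exp (|x| + 1) := mul_one _
  · filter_upwards with θ
    intro _ y hy
    exact (hasDerivAt_mul_const (Real.cos θ)).exp

lemma I0_nonneg (x : ℝ) : 0 ≤ besselI 0 x := by
  rw [besselI0_eq]
  apply mul_nonneg (by positivity)
  apply intervalIntegral.integral_nonneg Real.pi_pos.le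
  intro θ _; positivity

lemma I1_le_I0 (x : ℝ) : besselI 1 x ≤ besselI 0 x := by
  rw [besselI0_eq, besselI1_eq]
  apply mul_le_mul_of_nonneg_left _ (by positivity)
  apply intervalIntegral.integral_mono_on Real.pi_pos.le
    (Continuous.intervalIntegrable (by fun_prop) _ _)
    (Continuous.intervalIntegrable (by fun_prop) _ _)
  intro θ _
  nlinarith [Real.cos_le_one θ, Real.exp_pos (x * Real.cos θ)]

lemma K0_nonneg (x : ℝ) : 0 ≤ besselK 0 x := by
  rw [besselK0_eq]
  apply setIntegral_nonneg measurableSet_Ioi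
  intro t _; positivity

lemma K0_le_K1 {x : ℝ} (hx : 0 < x) : besselK 0 x ≤ besselK 1 x := by
  rw [besselK0_eq, besselK1_eq]
  apply setIntegral_mono_on (intK0 hx) (intK1 hx) measurableSet_Ioi
  intro t _
  nlinarith [Real.one_le_cosh t, Real.exp_pos (-x * Real.cosh t)]

lemma derivP_nonpos {x : ℝ} (hx : 0 < x) :
    deriv (fun x => besselI 0 x * besselK 0 x) x ≤ 0 := by
  have h : HasDerivAt (fun x => besselI 0 x * besselK 0 x)
      (besselI 1 x * besselK 0 x + besselI 0 x * -(besselK 1 x)) x :=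
    (hasDerivAt_I0 x).mul (hasDerivAt_K0 hx)
  rw [h.deriv]
  have h1 : besselI 1 x * besselK 0 x ≤ besselI 0 x * besselK 0 x :=
    mul_le_mul_of_nonneg_right (I1_le_I0 x) (K0_nonneg x)
  have h2 : besselI 0 x * besselK 0 x ≤ besselI 0 x * besselK 1 x :=
    mul_le_mul_of_nonneg_left (K0_le_K1 hx) (I0_nonneg x)
  linarith

/-- the quantity `ς(R)` is negative for all sufficiently large `R`. -/
theorem varsigma_neg_large_R (α β : ℝ) (hα : 0 < α) (hβ : 0 < β)
    (κ0 : ℝ → ℝ)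
    (hκ0 : ∀ R > (0:ℝ), 0 < κ0 R ∧
      (α + β) * R * (besselI 0 (κ0 R * R) * besselK 0 (κ0 R * R)) = 1) :
    ∃ R₁ > (0:ℝ), ∀ R : ℝ, R > R₁ →
      α * (1 - β * R) * (besselI 0 (R * κ0 R) * besselK 0 (R * κ0 R))
        + α * κ0 R * R * deriv (fun x => besselI 0 x * besselK 0 x) (R * κ0 R) < 0 := by
  refine ⟨1 / β, by positivity, fun R hR => ?_⟩
  have hR0 : 0 < R := lt_trans (by positivity) hR
  obtain ⟨hκpos, heq⟩ := hκ0 R hR0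
  have hx : 0 < R * κ0 R := mul_pos hR0 hκpos
  have hP : besselI 0 (R * κ0 R) * besselK 0 (R * κ0 R) = 1 / ((α + β) * R) := by
    rw [mul_comm R (κ0 R)]
    field_simp
    linarith [heq]
  have hβR : 1 < β * R := by
    rw [gt_iff_lt, div_lt_iff₀ hβ] at hR
    linarith [hR]
  have h1 : α * (1 - β * R) * (besselI 0 (R * κ0 R) * besselK 0 (R * κ0 R)) < 0 := by
    rw [hP]
    apply mul_neg_of_neg_of_pos
    · apply mul_neg_of_pos_of_neg hα; linarith
    · positivity
  have h2 : α * κ0 R * R * deriv (fun x => besselI 0 x * besselK 0 x) (R * κ0 R) ≤ 0 := by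
    apply mul_nonpos_of_nonneg_of_nonpos (by positivity) (derivP_nonpos hx)
  linarith
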